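/- Let n ≥ 1 and let G be the standard Gaussian measure on ℝⁿ (the n-fold product of the real Gaussian measure with mean 0 and variance 1). Then the mean of the logarithm of the norm satisfies ∫ ln ‖x‖ dG(x) = (1/2) ln 2 + (1/2) ψ(n/2), where ψ is the digamma function. -/

import Mathlib

open MeasureTheory Real Filter Topology

/-- The characteristic function of a measure on a real inner product space:
`charFun μ u = ∫ exp(i ⟪u, x⟫) dμ(x)`. -/
noncomputable def charFun {E : Type*} [NormedAddCommGroup E] [InnerProductSpace ℝ E]
    [MeasurableSpace E] (μ : Measure E) (u : E) : ℂ :=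
  ∫ x, Complex.exp (Complex.I * ((inner ℝ u x : ℝ) : ℂ)) ∂μ

/-- The digamma function `ψ(z) = Γ'(z) / Γ(z)`. -/
noncomputable def digamma (z : ℝ) : ℝ := deriv Real.Gamma z / Real.Gamma z

/-- The trigamma function `ψ'(z)`, the derivative of the digamma function. -/
noncomputable def trigamma (z : ℝ) : ℝ := deriv digamma z

/-- The standard Gaussian measure on `ℝⁿ`: the `n`-fold product of the real Gaussian
measure with mean `0` and variance `1`, viewed as a measure on `EuclideanSpace ℝ (Fin n)`. -/
noncomputable def stdGaussian (n : ℕ) : Measure (EuclideanSpace ℝ (Fin n)) :=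
  Measure.map (MeasurableEquiv.toLp 2 (Fin n → ℝ))
    (Measure.pi fun _ : Fin n => ProbabilityTheory.gaussianReal 0 1)

section aux

open Set


lemma my_lintegral_pi_prod : ∀ (n : ℕ) (μ : Fin n → Measure ℝ), (∀ i, SigmaFinite (μ i)) →
    ∀ (f : Fin n → ℝ → ENNReal), (∀ i, Measurable (f i)) →
    ∫⁻ x, ∏ i, f i (x i) ∂Measure.pi μ = ∏ i, ∫⁻ t, f i t ∂μ i := by
  intro n
  induction n with
  | zero =>
    intro μ _ f hf
    rw [Measure.pi_of_empty]
    simp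
  | succ m ih =>
    intro μ hμ f hf
    haveI := hμ
    have hmp := measurePreserving_piFinSuccAbove μ 0
    set F : ℝ × (Fin m → ℝ) → ENNReal :=
      fun y => f 0 y.1 * ∏ j, f (Fin.succAbove 0 j) (y.2 j) with hF
    have hFmeas : Measurable F :=
      ((hf 0).comp measurable_fst).mul
        (Finset.measurable_prod _ fun j _ => (hf _).comp ((measurable_pi_apply j).comp measurable_snd))
    have key : ∀ x : Fin (m+1) → ℝ,
        F (MeasurableEquiv.piFinSuccAbove (fun _ => ℝ) 0 x) = ∏ i, f i (x i) := by
      intro x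
      simp [F, MeasurableEquiv.piFinSuccAbove, Fin.prod_univ_succAbove (fun i => f i (x i)) 0,
        Fin.tail]
    calc ∫⁻ x, ∏ i, f i (x i) ∂Measure.pi μ
        = ∫⁻ x, F (MeasurableEquiv.piFinSuccAbove (fun _ => ℝ) 0 x) ∂Measure.pi μ := by
          simp_rw [key]
      _ = ∫⁻ y, F y ∂(μ 0).prod (Measure.pi fun j => μ (Fin.succAbove 0 j)) :=
          hmp.lintegral_comp hFmeas
      _ = ∏ i, ∫⁻ t, f i t ∂μ i := by
          rw [hF]
          rw [lintegral_prod_mul (f := fun t => f 0 t)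
            (g := fun v : Fin m → ℝ => ∏ j, f (Fin.succAbove 0 j) (v j)) (hf 0).aemeasurable
            (Finset.measurable_prod _ fun j _ => (hf _).comp (measurable_pi_apply j)).aemeasurable]
          rw [ih _ (fun j => hμ _) _ (fun j => hf _),
            Fin.prod_univ_succAbove (fun i => ∫⁻ t, f i t ∂μ i) 0]

lemma my_pi_withDensity (n : ℕ) (ν : Fin n → Measure ℝ) [∀ i, SigmaFinite (ν i)]
    (f : Fin n → ℝ → ENNReal) (hf : ∀ i, Measurable (f i))
    (hσ : ∀ i, SigmaFinite ((ν i).withDensity (f i))) :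
    Measure.pi (fun i => (ν i).withDensity (f i)) =
      (Measure.pi ν).withDensity (fun x => ∏ i, f i (x i)) := by
  haveI := hσ
  refine Measure.pi_eq fun s hs => ?_
  rw [withDensity_apply _ (MeasurableSet.univ_pi hs), ← lintegral_indicator (MeasurableSet.univ_pi hs)]
  have key : ∀ x : Fin n → ℝ, (Set.univ.pi s).indicator (fun x => ∏ i, f i (x i)) x
      = ∏ i, (s i).indicator (f i) (x i) := by
    intro x
    by_cases hx : x ∈ Set.univ.pi s
    · rw [Set.indicator_of_mem hx]
      exact Finset.prod_congr rfl fun i _ =>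
        (Set.indicator_of_mem (hx i (Set.mem_univ i)) _).symm
    · rw [Set.indicator_of_notMem hx]
      rw [Set.mem_univ_pi] at hx
      push_neg at hx
      obtain ⟨i, hi⟩ := hx
      exact (Finset.prod_eq_zero (Finset.mem_univ i)
        (Set.indicator_of_notMem hi _)).symm
  simp_rw [key]
  rw [my_lintegral_pi_prod n ν inferInstance _ (fun i => (hf i).indicator (hs i))]
  exact Finset.prod_congr rfl fun i _ => by
    rw [lintegral_indicator (hs i), withDensity_apply _ (hs i)]

lemma gauss_pi_eq (n : ℕ) :
    (Measure.pi fun _ : Fin n => ProbabilityTheory.gaussianReal 0 1) =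
      (volume : Measure (Fin n → ℝ)).withDensity
        (fun y => ∏ i, ProbabilityTheory.gaussianPDF 0 1 (y i)) := by
  have h : ∀ _i : Fin n, ProbabilityTheory.gaussianReal 0 1 =
      volume.withDensity (ProbabilityTheory.gaussianPDF 0 1) :=
    fun _ => ProbabilityTheory.gaussianReal_of_var_ne_zero 0 one_ne_zero
  haveI : ∀ _i : Fin n, SigmaFinite
      ((volume : Measure ℝ).withDensity (ProbabilityTheory.gaussianPDF 0 1)) := by
    intro i; rw [← h i]; infer_instance
  calc (Measure.pi fun _ : Fin n => ProbabilityTheory.gaussianReal 0 1)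
      = Measure.pi fun _ : Fin n => volume.withDensity (ProbabilityTheory.gaussianPDF 0 1) := by
        exact congrArg Measure.pi (funext h)
    _ = _ := my_pi_withDensity n _ _ (fun i => ProbabilityTheory.measurable_gaussianPDF 0 1) (fun i => this i)


lemma my_Gamma_deriv {s : ℝ} (hs : 0 < s) :
    IntegrableOn (fun t : ℝ => t ^ (s - 1) * (Real.log t * Real.exp (-t))) (Set.Ioi 0) ∧
    HasDerivAt Real.Gamma (∫ t in Set.Ioi 0, t ^ (s - 1) * (Real.log t * Real.exp (-t))) s := by
  have hs' : 0 < (s : ℂ).re := by simpa using hs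
  -- the Mellin machinery, as in Complex.hasDerivAt_GammaIntegral
  have hmel : MellinConvergent (fun t => Real.log t • ((Real.exp (-t) : ℝ) : ℂ)) (s : ℂ) ∧
      HasDerivAt (mellin fun x : ℝ => ((Real.exp (-x) : ℝ) : ℂ))
        (mellin (fun t => Real.log t • ((Real.exp (-t) : ℝ) : ℂ)) (s : ℂ)) (s : ℂ) := by
    refine mellin_hasDerivAt_of_isBigO_rpow (a := s + 1) (b := 0) ?_ ?_ (by simpa using lt_add_one s) ?_ (by simpa using hs)
    · refine (Continuous.continuousOn ?_).locallyIntegrableOn measurableSet_Ioi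
      exact Complex.continuous_ofReal.comp (Real.continuous_exp.comp continuous_neg)
    · rw [← Asymptotics.isBigO_norm_left]
      simp_rw [Complex.norm_real,
        Asymptotics.isBigO_norm_left]
      simpa only [neg_one_mul] using
        (isLittleO_exp_neg_mul_rpow_atTop zero_lt_one _).isBigO
    · simp_rw [neg_zero, Real.rpow_zero]
      refine Asymptotics.isBigO_const_of_tendsto (?_ : Tendsto _ _ (𝓝 (1 : ℂ))) one_ne_zero
      rw [(by simp : (1 : ℂ) = Real.exp (-0))]
      exact (Complex.continuous_ofReal.comp
        (Real.continuous_exp.comp continuous_neg)).continuousWithinAt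
  -- identify the complex integrand with the real one
  have hae : (fun t : ℝ => (t : ℂ) ^ ((s : ℂ) - 1) • (Real.log t • ((Real.exp (-t) : ℝ) : ℂ)))
      =ᵐ[volume.restrict (Set.Ioi 0)]
      (fun t : ℝ => ((t ^ (s - 1) * (Real.log t * Real.exp (-t)) : ℝ) : ℂ)) := by
    filter_upwards [ae_restrict_mem measurableSet_Ioi] with t ht
    rw [show ((s : ℂ) - 1) = ((s - 1 : ℝ) : ℂ) by push_cast; ring,
      ← Complex.ofReal_cpow (le_of_lt ht)]
    simp only [smul_eq_mul, Complex.real_smul]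
    push_cast
    ring
  have hint : IntegrableOn (fun t : ℝ => t ^ (s - 1) * (Real.log t * Real.exp (-t))) (Set.Ioi 0) := by
    have := (hmel.1.congr hae).re
    refine this.congr (by filter_upwards with t; simp only [RCLike.re_to_complex, Complex.ofReal_re])
  refine ⟨hint, ?_⟩
  -- identify the derivative value
  have hval : mellin (fun t => Real.log t • ((Real.exp (-t) : ℝ) : ℂ)) (s : ℂ)
      = ((∫ t in Set.Ioi 0, t ^ (s - 1) * (Real.log t * Real.exp (-t)) : ℝ) : ℂ) := by
    rw [mellin]
    rw [integral_congr_ae hae]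
    exact integral_ofReal
  -- HasDerivAt for Complex.Gamma
  have hC : HasDerivAt Complex.Gamma
      (((∫ t in Set.Ioi 0, t ^ (s - 1) * (Real.log t * Real.exp (-t)) : ℝ) : ℂ)) (s : ℂ) := by
    have h1 : HasDerivAt Complex.GammaIntegral
        (((∫ t in Set.Ioi 0, t ^ (s - 1) * (Real.log t * Real.exp (-t)) : ℝ) : ℂ)) (s : ℂ) := by
      rw [← hval]
      have := hmel.2
      rwa [← Complex.GammaIntegral_eq_mellin] at this
    refine h1.congr_of_eventuallyEq ?_
    have hopen : IsOpen {z : ℂ | 0 < z.re} := isOpen_lt continuous_const Complex.continuous_re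
    filter_upwards [hopen.mem_nhds hs'] with z hz
    exact Complex.Gamma_eq_integral hz
  have := hC.real_of_complex
  simp only [Complex.ofReal_re] at this
  refine this.congr_of_eventuallyEq ?_
  filter_upwards with x
  rw [Complex.Gamma_ofReal, Complex.ofReal_re]

lemma my_radial (n : ℕ) (hn : 1 ≤ n) :
    ∫ r in Ioi (0:ℝ), r ^ (n - 1 : ℕ) • (Real.exp (-(r^2)/2) * Real.log r)
      = 2 ^ ((n:ℝ)/2 - 2) * (Real.log 2 * Real.Gamma ((n:ℝ)/2)
          + deriv Real.Gamma ((n:ℝ)/2)) := by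
  set s : ℝ := (n:ℝ)/2 with hsdef
  have hs : 0 < s := by positivity
  have hB := my_Gamma_deriv hs
  set g : ℝ → ℝ := fun t => t ^ (s-1) * Real.exp (-t) * Real.log (2*t) with hg
  -- value of ∫ g
  have claim1 : ∫ t in Ioi (0:ℝ), g t = Real.log 2 * Real.Gamma s + deriv Real.Gamma s := by
    have hsplit : ∫ t in Ioi (0:ℝ), g t
        = ∫ t in Ioi (0:ℝ), (Real.exp (-t) * t ^ (s-1) * Real.log 2
            + t ^ (s-1) * (Real.log t * Real.exp (-t))) := by
      refine setIntegral_congr_fun measurableSet_Ioi fun t ht => ?_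
      rw [hg]
      simp only
      rw [Real.log_mul two_ne_zero (ne_of_gt ht)]
      ring
    rw [hsplit, integral_add ((Real.GammaIntegral_convergent hs).mul_const _) hB.1,
      ← hB.2.deriv]
    congr 1
    rw [integral_mul_const, Real.Gamma_eq_integral hs, mul_comm]
  -- substitution chain
  have h1 : ∫ x in Ioi (0:ℝ), (2 * x ^ ((2:ℝ) - 1)) • g (2⁻¹ * x ^ (2:ℝ))
      = ∫ t in Ioi (0:ℝ), g (2⁻¹ * t) :=
    integral_comp_rpow_Ioi_of_pos (g := fun t => g (2⁻¹ * t)) two_pos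
  have h2 : ∫ x in Ioi (0:ℝ), g (2⁻¹ * x) = 2 * ∫ x in Ioi (0:ℝ), g x := by
    have := integral_comp_mul_left_Ioi g 0 (by norm_num : (0:ℝ) < 2⁻¹)
    simpa [smul_eq_mul] using this
  have h3 : ∫ x in Ioi (0:ℝ), (2 * x ^ ((2:ℝ) - 1)) • g (2⁻¹ * x ^ (2:ℝ))
      = 2 ^ ((3:ℝ) - s) * ∫ r in Ioi (0:ℝ), r ^ (n - 1 : ℕ) • (Real.exp (-(r^2)/2) * Real.log r) := by
    rw [← integral_const_mul]
    refine setIntegral_congr_fun measurableSet_Ioi fun x hx => ?_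
    have hx0 : (0:ℝ) < x := hx
    have hx2 : x ^ ((2:ℝ)) = x ^ (2:ℕ) := by
      rw [← Real.rpow_natCast x 2]; norm_num
    have harg : 2⁻¹ * x ^ ((2:ℝ)) = x^(2:ℕ)/2 := by rw [hx2]; ring
    rw [smul_eq_mul, smul_eq_mul, hg]
    simp only
    rw [harg]
    have hlog : Real.log (2 * (x^(2:ℕ)/2)) = 2 * Real.log x := by
      rw [show (2 : ℝ) * (x^(2:ℕ)/2) = x^(2:ℕ) by ring, Real.log_pow]
      norm_num
    have hpow : (x^(2:ℕ)/2 : ℝ) ^ (s-1) = 2 ^ ((1:ℝ)-s) * x ^ (2*s-2) := by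
      rw [div_eq_mul_inv, Real.mul_rpow (by positivity) (by positivity),
        ← Real.rpow_natCast x 2, ← Real.rpow_mul hx0.le,
        ← Real.rpow_neg_one (2:ℝ), ← Real.rpow_mul (by norm_num : (0:ℝ) ≤ 2)]
      ring_nf
    have hxn : x ^ (n - 1 : ℕ) = x ^ ((n:ℝ) - 1) := by
      rw [← Real.rpow_natCast x (n-1), Nat.cast_sub hn, Nat.cast_one]
    rw [hlog, hpow, hxn]
    have hexp : -(x^(2:ℕ)/2 : ℝ) = -(x^2)/2 := by ring
    rw [hexp]
    have hx1 : x ^ ((2:ℝ)-1) = x := by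
      norm_num
    rw [hx1]
    have hcomb : x * x ^ (2*s-2 : ℝ) = x ^ ((n:ℝ)-1) := by
      rw [show x * x ^ (2*s-2 : ℝ) = x ^ (1:ℝ) * x ^ (2*s-2:ℝ) by rw [Real.rpow_one],
        ← Real.rpow_add hx0]
      congr 1
      rw [hsdef]; ring
    have h23 : (2:ℝ) ^ ((3:ℝ)-s) = 2 * 2^((1:ℝ)-s) * 2 := by
      rw [show (3:ℝ)-s = 1 + ((1:ℝ)-s) + 1 by ring, Real.rpow_add two_pos,
        Real.rpow_add two_pos, Real.rpow_one]
      all_goals ring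
    calc 2 * x * (2 ^ ((1:ℝ)-s) * x ^ (2*s-2) * Real.exp (-(x^2)/2) * (2 * Real.log x))
        = (2 * 2^((1:ℝ)-s) * 2) * ((x * x ^ (2*s-2:ℝ)) * (Real.exp (-(x^2)/2) * Real.log x)) := by
          ring
      _ = 2 ^ ((3:ℝ)-s) * (x ^ ((n:ℝ)-1) * (Real.exp (-(x^2)/2) * Real.log x)) := by
          rw [hcomb, h23]
  -- combine
  have hK : 2 ^ ((3:ℝ) - s) * ∫ r in Ioi (0:ℝ), r ^ (n - 1 : ℕ) • (Real.exp (-(r^2)/2) * Real.log r)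
      = 2 * ∫ t in Ioi (0:ℝ), g t := by
    rw [← h3, h1, h2]
  have h2s : (2:ℝ) ^ ((n:ℝ)/2 - 2) * 2 ^ ((3:ℝ) - s) = 2 := by
    rw [← Real.rpow_add two_pos, hsdef]
    norm_num
  set K : ℝ := ∫ r in Ioi (0:ℝ), r ^ (n - 1 : ℕ) • (Real.exp (-(r^2)/2) * Real.log r) with hKdef
  set G : ℝ := ∫ t in Ioi (0:ℝ), g t with hGdef
  have h2s' : (2:ℝ) ^ (s - 2) * 2 ^ ((3:ℝ) - s) = 2 := by
    rw [← Real.rpow_add two_pos]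
    norm_num
  rw [← claim1]
  linear_combination ((2:ℝ)^(s-2)/2) * hK - (K/2) * h2s'

end aux

open Set in
theorem mean_log_norm_stdGaussian (n : ℕ) (hn : 1 ≤ n) :
    ∫ x, Real.log ‖x‖ ∂(stdGaussian n) =
      (1 / 2) * Real.log 2 + (1 / 2) * digamma (n / 2) := by
  classical
  set s : ℝ := (n:ℝ)/2 with hsdef
  have hs : 0 < s := by positivity
  haveI : Nonempty (Fin n) := ⟨⟨0, hn⟩⟩
  haveI : Nontrivial (EuclideanSpace ℝ (Fin n)) :=
    inferInstance
  set e := (MeasurableEquiv.toLp 2 (Fin n → ℝ)).symm with he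
  set f : ℝ → ℝ := fun r => Real.exp (-(r^2)/2) * Real.log r with hf
  set c : ℝ := ((Real.sqrt (2*π))⁻¹)^n with hc
  -- Step 1+2: unfold to a density integral over (Fin n → ℝ)
  have step1 : ∫ x, Real.log ‖x‖ ∂(stdGaussian n)
      = ∫ y : Fin n → ℝ,
          (∏ i, (ProbabilityTheory.gaussianPDFReal 0 1 (y i)).toNNReal : NNReal)
            • Real.log ‖e.symm y‖ ∂(volume : Measure (Fin n → ℝ)) := by
    rw [stdGaussian, integral_map_equiv, gauss_pi_eq n]
    have hd : (fun y : Fin n → ℝ => ∏ i, ProbabilityTheory.gaussianPDF 0 1 (y i))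
        = fun y => ((∏ i, (ProbabilityTheory.gaussianPDFReal 0 1 (y i)).toNNReal : NNReal) : ENNReal) := by
      funext y
      rw [ENNReal.coe_finset_prod]
      rfl
    rw [hd, integral_withDensity_eq_integral_smul]
    · rfl
    exact Finset.measurable_prod _ fun i _ =>
      ((ProbabilityTheory.measurable_gaussianPDFReal 0 1).comp (measurable_pi_apply i)).real_toNNReal
  -- Step 3: pointwise identification with a radial function on Euclidean space
  have hpoint : ∀ y : Fin n → ℝ,
      ((∏ i, (ProbabilityTheory.gaussianPDFReal 0 1 (y i)).toNNReal : NNReal) : ℝ)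
          * Real.log ‖e.symm y‖ = c * f ‖(e.symm y : EuclideanSpace ℝ (Fin n))‖ := by
    intro y
    have hnorm2 : ‖(e.symm y : EuclideanSpace ℝ (Fin n))‖^2 = ∑ i, (y i)^2 := by
      rw [EuclideanSpace.norm_eq, Real.sq_sqrt (by positivity)]
      exact Finset.sum_congr rfl fun i _ => by rw [Real.norm_eq_abs, sq_abs]; rfl
    have hprod : ((∏ i, (ProbabilityTheory.gaussianPDFReal 0 1 (y i)).toNNReal : NNReal) : ℝ)
        = c * Real.exp (-(∑ i, (y i)^2)/2) := by
      push_cast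
      rw [Finset.prod_congr rfl (fun i _ => Real.coe_toNNReal _
        (ProbabilityTheory.gaussianPDFReal_nonneg 0 1 (y i)))]
      simp only [ProbabilityTheory.gaussianPDFReal, NNReal.coe_one, mul_one, sub_zero]
      rw [Finset.prod_mul_distrib, Finset.prod_const, ← Real.exp_sum]
      simp only [Finset.card_univ, Fintype.card_fin]
      rw [← hc]
      congr 1
      rw [← Finset.sum_div, ← Finset.sum_neg_distrib]
    rw [hprod, hf]
    simp only
    rw [hnorm2]
    ring
  -- Step 4: transfer to Euclidean space and use polar coordinates
  have step2 : ∫ y : Fin n → ℝ,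
      (∏ i, (ProbabilityTheory.gaussianPDFReal 0 1 (y i)).toNNReal : NNReal)
        • Real.log ‖e.symm y‖ ∂(volume : Measure (Fin n → ℝ))
      = c * ∫ x : EuclideanSpace ℝ (Fin n), f ‖x‖ := by
    have := ((EuclideanSpace.volume_preserving_symm_measurableEquiv_toLp (Fin n)).symm).integral_comp
      (MeasurableEquiv.measurableEmbedding _)
      (fun x : EuclideanSpace ℝ (Fin n) => c * f ‖x‖)
    rw [← integral_const_mul, ← this]
    refine integral_congr_ae (Filter.Eventually.of_forall fun y => ?_)
    simp only [NNReal.smul_def, smul_eq_mul, ← he]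
    exact hpoint y
  have step3 : ∫ x : EuclideanSpace ℝ (Fin n), f ‖x‖
      = n • ((volume (Metric.ball (0 : EuclideanSpace ℝ (Fin n)) 1)).toReal
          • ∫ r in Ioi (0:ℝ), r ^ (n - 1 : ℕ) • f r) := by
    have := MeasureTheory.integral_fun_norm_addHaar
      (volume : Measure (EuclideanSpace ℝ (Fin n))) f
    simpa only [finrank_euclideanSpace_fin, measureReal_def] using this
  -- volume of the unit ball
  have hΓpos : 0 < Real.Gamma s := Real.Gamma_pos_of_pos hs
  have hball : (volume (Metric.ball (0 : EuclideanSpace ℝ (Fin n)) 1)).toReal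
      = Real.sqrt π ^ n / Real.Gamma (s + 1) := by
    rw [EuclideanSpace.volume_ball]
    simp only [Fintype.card_fin, ENNReal.ofReal_one, one_pow, one_mul]
    rw [ENNReal.toReal_ofReal (div_nonneg (by positivity)
      (Real.Gamma_pos_of_pos (by positivity : (0:ℝ) < (n:ℝ)/2 + 1)).le)]
  -- put it all together
  rw [step1, step2, step3, hball, my_radial n hn]
  have hΓ1 : Real.Gamma (s + 1) = s * Real.Gamma s := Real.Gamma_add_one hs.ne'
  have hsqrt2 : (Real.sqrt 2)^n = 2 ^ s := by
    rw [Real.sqrt_eq_rpow, ← Real.rpow_natCast ((2:ℝ) ^ ((1:ℝ)/2)) n,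
      ← Real.rpow_mul (by norm_num)]
    rw [hsdef]
    congr 1
    ring
  have hc' : c = ((Real.sqrt 2)^n * (Real.sqrt π)^n)⁻¹ := by
    rw [hc, ← mul_pow, ← Real.sqrt_mul (by norm_num) π, inv_pow]
  have h2s2 : (2:ℝ) ^ ((n:ℝ)/2 - 2) = 2 ^ s / 4 := by
    rw [← hsdef, show s - 2 = s + (-2 : ℝ) by ring, Real.rpow_add two_pos,
      show (2:ℝ) ^ (-2:ℝ) = 1/4 by norm_num]
    ring
  have hn2 : (n:ℝ) = 2 * s := by rw [hsdef]; ring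
  have hp : (0:ℝ) < (Real.sqrt π)^n := by positivity
  have h2sp : (0:ℝ) < (2:ℝ) ^ s := Real.rpow_pos_of_pos two_pos s
  rw [digamma, ← hsdef, hc', hsqrt2, hΓ1, h2s2, nsmul_eq_mul, smul_eq_mul, hn2]
  field_simp
  ring
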